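/- arXiv:0811.0961 — 2 statements merged into one kernel-verified Lean document; each statement's English description precedes it below -/
import Mathlib

section
/- In the setting of the proof of the Moduli Theorem, with Φ : D → Hom(H^{d+1}(X,ℤ), ℝ) ≅ ℝ^k defined by Φ(r_1,…,r_k) = Σ_{i=1}^k J_{∂Γ_i(r_i)}, the Jacobian matrix is DΦ = (∂/∂r_i ∫_{Γ_i(r_i)} θ_j)_{i,j=1,…,k}, and there exists an interior point r_0 = (r_{0,1},…,r_{0,k}) ∈ (0,1)^k such that det DΦ(r_0) > 0. -/
/-- **Lemma 6.16 (posdet) of the paper**, in the setting of the proof of the Moduli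
Theorem.

`{θ_1, …, θ_k}`, `k = dim H^{d+1}(X, ℝ)`, is an orthonormal basis of the lattice
`𝓗^{d+1}(X, ℤ)`, and `Γ_i(r) = Γ_i ∘ φ_r` are the deformed regular `(d+1)`-simplices.
Here `J i r = J_{∂Γ_i(r)} = (∫_{Γ_i(r)} θ_1, …, ∫_{Γ_i(r)} θ_k)` is the `i`-th Jacobi
vector, depending only on the single variable `r`, with derivative `J' i r`
(hypotheses: continuity on `[0,1]`, continuous differentiability on `(0,1)`,
`J_{∂Γ_i(r)} → 0` as `r ↓ 0`, and `det (∫_{Γ_i(r_i)} θ_j)_{ij} > 0` for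
`r_1, …, r_k ∈ (1−ε, 1]`), and `Φ(r_1, …, r_k) = Σ_i J_{∂Γ_i(r_i)}`.

The lemma: the Jacobian matrix of `Φ` is
`DΦ = (∂/∂r_i ∫_{Γ_i(r_i)} θ_j)_{i,j}` (first conjunct: at every interior point `r`,
`Φ` has total derivative the linear map given by this matrix), and there is an
interior point `r₀ ∈ (0,1)^k` with `det DΦ(r₀) > 0`. -/
theorem posdet_lemma
    (k : ℕ) (hk : 1 ≤ k)
    (J J' : Fin k → ℝ → (Fin k → ℝ))
    (hcont : ∀ i, ContinuousOn (J i) (Set.Icc 0 1))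
    (hderiv : ∀ i, ∀ r ∈ Set.Ioo (0 : ℝ) 1, HasDerivAt (J i) (J' i r) r)
    (hderivCont : ∀ i, ContinuousOn (J' i) (Set.Ioo 0 1))
    (hlim : ∀ i, Filter.Tendsto (J i) (nhdsWithin 0 (Set.Ioi 0)) (nhds 0))
    (hdet : ∃ ε > (0 : ℝ), ∀ r : Fin k → ℝ, (∀ i, r i ∈ Set.Ioc (1 - ε) 1) →
      0 < (Matrix.of fun i j => J i (r i) j).det) :
    -- the Jacobian matrix of Φ(r) = Σ_i J_{∂Γ_i(r_i)} is (∂/∂r_i ∫_{Γ_i(r_i)} θ_j)_{ij}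
    (∀ r : Fin k → ℝ, (∀ i, r i ∈ Set.Ioo (0 : ℝ) 1) →
      HasFDerivAt (fun s : Fin k → ℝ => ∑ i, J i (s i))
        (LinearMap.toContinuousLinearMap
          (Matrix.toLin' (Matrix.of fun j i => J' i (r i) j))) r) ∧
    -- there is an interior point where det DΦ > 0
    (∃ r₀ : Fin k → ℝ, (∀ i, r₀ i ∈ Set.Ioo (0 : ℝ) 1) ∧
      0 < (Matrix.of fun i j => J' i (r₀ i) j).det) := by
  classical
  open Set in
  constructor
  · -- Part 1: the total derivative of Φ
    intro r hr
    have h : ∀ i ∈ Finset.univ, HasFDerivAt (fun s : Fin k → ℝ => J i (s i))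
        (((1 : ℝ →L[ℝ] ℝ).smulRight (J' i (r i))).comp
          (ContinuousLinearMap.proj i)) r := by
      intro i _
      have hp : HasFDerivAt (fun s : Fin k → ℝ => s i)
          (ContinuousLinearMap.proj i (R := ℝ) (φ := fun _ : Fin k => ℝ)) r :=
        (ContinuousLinearMap.proj (R:=ℝ) (φ:=fun _ : Fin k => ℝ) i).hasFDerivAt
      exact ((hderiv i (r i) (hr i)).hasFDerivAt).comp r hp
    have hsum := HasFDerivAt.fun_sum h
    refine HasFDerivAt.congr_fderiv hsum ?_
    ext v j
    simp [Matrix.toLin'_apply, Matrix.mulVec, dotProduct, ContinuousLinearMap.proj_apply,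
      Finset.sum_apply, mul_comm]
  · -- Part 2: an interior point with positive Jacobian determinant
    obtain ⟨ε, hε, hdet⟩ := hdet
    by_contra hcon
    push_neg at hcon
    set δ : ℝ := min ε 1 with hδdef
    have hδ0 : 0 < δ := lt_min hε one_pos
    have hδ1 : δ ≤ 1 := min_le_right _ _
    set b : ℝ := 1 - δ / 2 with hbdef
    have hb0 : 0 < b := by simp only [hbdef]; linarith
    have hb1 : b < 1 := by simp only [hbdef]; linarith
    have hbε : 1 - ε < b := by
      have : δ ≤ ε := min_le_left _ _
      simp only [hbdef]; linarith
    -- Step 1: for every a ∈ (0, b), det (J i b - J i a)_{ij} ≤ 0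
    have key : ∀ a ∈ Ioo (0 : ℝ) b,
        (Matrix.of fun i j => J i b j - J i a j).det ≤ 0 := by
      intro a ha
      have hab : a ≤ b := le_of_lt ha.2
      have hIcc : Icc a b ⊆ Ioo (0 : ℝ) 1 := fun t ht =>
        ⟨lt_of_lt_of_le ha.1 ht.1, lt_of_le_of_lt ht.2 hb1⟩
      have hint : ∀ i : Fin k, IntervalIntegrable (J' i) MeasureTheory.volume a b := by
        intro i
        apply ContinuousOn.intervalIntegrable
        rw [Set.uIcc_of_le hab]
        exact (hderivCont i).mono hIcc
      -- inductive claim: rows below `m` replaced by iterated integrals of J'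
      have main : ∀ m : ℕ, m ≤ k → ∀ s : Fin k → ℝ, (∀ i, s i ∈ Ioo (0 : ℝ) 1) →
          (Matrix.of fun i : Fin k =>
            if (i : ℕ) < m then (∫ t in a..b, J' i t) else J' i (s i)).det ≤ 0 := by
        intro m
        induction m with
        | zero =>
          intro _ s hs
          simpa using hcon s hs
        | succ m ih =>
          intro hm s hs
          have hmk : m < k := lt_of_lt_of_le (Nat.lt_succ_self m) hm
          set i0 : Fin k := ⟨m, hmk⟩ with hi0
          set M : Matrix (Fin k) (Fin k) ℝ := Matrix.of fun i : Fin k =>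
            if (i : ℕ) < m then (∫ t in a..b, J' i t) else J' i (s i) with hM
          -- the (m+1)-matrix is an updateRow of M
          have hupd : (Matrix.of fun i : Fin k =>
              if (i : ℕ) < m + 1 then (∫ t in a..b, J' i t) else J' i (s i)) =
              M.updateRow i0 (∫ t in a..b, J' i0 t) := by
            ext i j
            by_cases hii : i = i0
            · subst hii
              simp [Matrix.updateRow_self, Nat.lt_succ_self, hi0]
            · have hne : (i : ℕ) ≠ m := fun h => hii (Fin.ext h)
              have : ((i : ℕ) < m + 1) ↔ ((i : ℕ) < m) := by omega
              simp [Matrix.updateRow_ne hii, hM, this, show ((i : ℕ) ≤ m ↔ (i : ℕ) < m) by omega]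
          -- the continuous linear map v ↦ det (M.updateRow i0 v)
          set L : (Fin k → ℝ) →L[ℝ] ℝ := LinearMap.toContinuousLinearMap
            { toFun := fun v => (M.updateRow i0 v).det
              map_add' := fun u v => Matrix.det_updateRow_add M i0 u v
              map_smul' := fun c v => Matrix.det_updateRow_smul M i0 c v } with hL
          have hLapp : ∀ v, L v = (M.updateRow i0 v).det := fun v => rfl
          rw [hupd, show (M.updateRow i0 (∫ t in a..b, J' i0 t)).det
              = L (∫ t in a..b, J' i0 t) from rfl,
            ← L.intervalIntegral_comp_comm (hint i0)]
          -- the integrand is nonpositive by the inductive hypothesis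
          have hptwise : ∀ t ∈ Icc a b, L (J' i0 t) ≤ 0 := by
            intro t ht
            have hts : ∀ i, Function.update s i0 t i ∈ Ioo (0:ℝ) 1 := by
              intro i
              by_cases hii : i = i0
              · subst hii; simpa using hIcc ht
              · simpa [Function.update_of_ne hii] using hs i
            have := ih (le_of_lt (Nat.lt_of_succ_le hm)) (Function.update s i0 t) hts
            have heq : (Matrix.of fun i : Fin k =>
                if (i : ℕ) < m then (∫ u in a..b, J' i u)
                else J' i (Function.update s i0 t i)) = M.updateRow i0 (J' i0 t) := by
              ext i j
              by_cases hii : i = i0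
              · subst hii
                simp [Matrix.updateRow_self, Function.update_self, hi0]
              · have hne : (i : ℕ) ≠ m := fun h => hii (Fin.ext h)
                simp [Matrix.updateRow_ne hii, hM, Function.update_of_ne hii]
            rw [hLapp, ← heq]
            exact this
          have hneg : (0:ℝ) ≤ ∫ t in a..b, -(L (J' i0 t)) :=
            intervalIntegral.integral_nonneg hab (fun u hu => neg_nonneg.2 (hptwise u hu))
          rw [intervalIntegral.integral_neg] at hneg
          linarith
      have := main k (le_refl k) (fun _ => b) (fun _ => ⟨hb0, hb1⟩)
      simp only [Fin.is_lt, if_true] at this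
      -- fundamental theorem of calculus: ∫_a^b J'_i = J_i(b) - J_i(a)
      have hftc : ∀ i : Fin k, (∫ t in a..b, J' i t) = J i b - J i a := by
        intro i
        apply intervalIntegral.integral_eq_sub_of_hasDerivAt
        · intro x hx
          rw [Set.uIcc_of_le hab] at hx
          exact hderiv i x (hIcc hx)
        · exact hint i
      have heq2 : (Matrix.of fun i : Fin k => (∫ t in a..b, J' i t)) =
          (Matrix.of fun i j => J i b j - J i a j) := by
        ext i j
        rw [Matrix.of_apply, hftc i]
        simp
      rwa [heq2] at this
    -- Step 2: take the limit a → 0⁺ using J_i(a) → 0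
    have hval : ∀ i j, Filter.Tendsto (fun a => J i b j - J i a j)
        (nhdsWithin 0 (Set.Ioi 0)) (nhds (J i b j)) := by
      intro i j
      have h1 : Filter.Tendsto (fun a => J i a j) (nhdsWithin 0 (Set.Ioi 0)) (nhds 0) := by
        have := ((continuous_apply j).tendsto (0 : Fin k → ℝ)).comp (hlim i)
        simpa [Function.comp_def] using this
      have := Filter.Tendsto.const_sub (J i b j) h1
      simpa using this
    have hmat : Filter.Tendsto (fun a => (Matrix.of fun i j => J i b j - J i a j))
        (nhdsWithin 0 (Set.Ioi 0)) (nhds (Matrix.of fun i j => J i b j)) := by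
      refine tendsto_pi_nhds.2 ?_
      intro i
      rw [tendsto_pi_nhds]
      intro j
      exact hval i j
    have hdettend : Filter.Tendsto (fun a => (Matrix.of fun i j => J i b j - J i a j).det)
        (nhdsWithin 0 (Set.Ioi 0)) (nhds ((Matrix.of fun i j => J i b j).det)) :=
      ((Continuous.matrix_det continuous_id).tendsto _).comp hmat
    have hle : (Matrix.of fun i j => J i b j).det ≤ 0 := by
      apply le_of_tendsto hdettend
      filter_upwards [Ioo_mem_nhdsGT_of_mem (⟨le_refl (0:ℝ), hb0⟩ : (0:ℝ) ∈ Ico (0:ℝ) b)]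
        with a ha
      exact key a ha
    have hgt : 0 < (Matrix.of fun i j => J i b j).det := by
      have := hdet (fun _ => b) (fun _ => ⟨hbε, le_of_lt hb1⟩)
      simpa using this
    linarith
end

section
/- Let k ≥ 1 and let c_1,…,c_k : [0,1] → ℝ^k be continuous curves, each continuously differentiable on (0,1), such that c_i(r) → 0 as r ↓ 0 for each i, and such that there exists ε > 0 with det M(r_1,…,r_k) > 0 whenever r_1,…,r_k ∈ (1−ε,1], where M(r_1,…,r_k) is the k×k matrix whose i-th row is c_i(r_i). Then there exists r_0 = (r_{0,1},…,r_{0,k}) ∈ (0,1)^k such that the matrix with i-th row c_i′(r_{0,i}) has positive determinant. -/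
/-- **The analytic content of Lemma 6.16 (posdet) of the paper.**

Let `k ≥ 1` and let `c_1, …, c_k : [0,1] → ℝ^k` be continuous curves, each
continuously differentiable on `(0,1)`, such that `c_i(r) → 0` as `r ↓ 0` for each
`i`, and such that there exists `ε > 0` with `det M(r_1, …, r_k) > 0` whenever
`r_1, …, r_k ∈ (1−ε, 1]`, where `M(r_1, …, r_k)` is the `k × k` matrix whose `i`-th
row is `c_i(r_i)`.  Then there exists `r₀ = (r_{0,1}, …, r_{0,k}) ∈ (0,1)^k` such that
the matrix with `i`-th row `c_i'(r_{0,i})` has positive determinant. -/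
theorem posdet_analytic
    (k : ℕ) (hk : 1 ≤ k)
    (c : Fin k → ℝ → (Fin k → ℝ))
    (hcont : ∀ i, ContinuousOn (c i) (Set.Icc 0 1))
    (hdiff : ∀ i, ContDiffOn ℝ 1 (c i) (Set.Ioo 0 1))
    (hlim : ∀ i, Filter.Tendsto (c i) (nhdsWithin 0 (Set.Ioi 0)) (nhds 0))
    (hdet : ∃ ε > (0 : ℝ), ∀ r : Fin k → ℝ, (∀ i, r i ∈ Set.Ioc (1 - ε) 1) →
      0 < (Matrix.of fun i j => c i (r i) j).det) :
    ∃ r₀ : Fin k → ℝ, (∀ i, r₀ i ∈ Set.Ioo (0 : ℝ) 1) ∧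
      0 < (Matrix.of fun i j => deriv (c i) (r₀ i) j).det := by

  -- differentiability on the open interval
  have hdiffAt : ∀ i, ∀ t ∈ Set.Ioo (0:ℝ) 1, HasDerivAt (c i) (deriv (c i) t) t := by
    intro i t ht
    have := ((hdiff i).differentiableOn one_ne_zero t ht).differentiableAt
      (isOpen_Ioo.mem_nhds ht)
    exact this.hasDerivAt
  have key : ∀ m : ℕ, m ≤ k → ∃ r : Fin k → ℝ, (∀ i, r i ∈ Set.Ioo (0:ℝ) 1) ∧
      ∃ δ > (0:ℝ), ∀ s : Fin k → ℝ, (∀ i, s i ∈ Set.Ioc (1-δ) 1) →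
        0 < (Matrix.of fun (i j : Fin k) =>
          if (i:ℕ) < m then deriv (c i) (r i) j else c i (s i) j).det := by
    intro m
    induction m with
    | zero =>
      intro _
      obtain ⟨ε, hε, hd⟩ := hdet
      refine ⟨fun _ => 1/2, fun _ => by norm_num, ε, hε, fun s hs => ?_⟩
      simpa using hd s hs
    | succ m IH =>
      intro hm1
      obtain ⟨r, hr, δ, hδ, hP⟩ := IH (le_of_lt hm1)
      set i0 : Fin k := ⟨m, hm1⟩ with hi0
      set v : Fin k → Fin k → ℝ :=
        fun i => if (i:ℕ) < m then deriv (c i) (r i) else c i 1 with hv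
      set L : (Fin k → ℝ) →ₗ[ℝ] ℝ :=
        (Matrix.detRowAlternating (R := ℝ) (n := Fin k)).toMultilinearMap.toLinearMap v i0
        with hL
      have hLapp : ∀ x, L x = (Matrix.of (Function.update v i0 x)).det := by
        intro x; rfl
      -- g is positive for t near 1
      have hg_pos : ∀ t ∈ Set.Ioc (1-δ) 1, 0 < L (c i0 t) := by
        intro t ht
        have hs : ∀ i, Function.update (fun _ => (1:ℝ)) i0 t i ∈ Set.Ioc (1-δ) 1 := by
          intro i
          rcases eq_or_ne i i0 with h | h
          · subst h; simpa using ht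
          · rw [Function.update_of_ne h]
            exact ⟨by linarith, le_rfl⟩
        have := hP _ hs
        rw [hLapp]
        convert this using 2
        funext i j
        rcases eq_or_ne i i0 with h | h
        · subst h
          have h3 : ¬ ((i0:ℕ) < m) := Nat.lt_irrefl m
          simp [Function.update_self, h3]
        · have hne : (i:ℕ) ≠ m := fun hh => h (Fin.ext hh)
          simp [Function.update_of_ne h, v]
          rcases lt_or_ge (i:ℕ) m with h2 | h2
          · simp [h2]
          · have : ¬ ((i:ℕ) < m) := not_lt.mpr h2
            simp [this]
      have hg1 : 0 < L (c i0 1) := hg_pos 1 ⟨by linarith, le_refl 1⟩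
      -- g tends to 0 at 0+
      have hLc : Continuous L := L.continuous_of_finiteDimensional
      have htend : Filter.Tendsto (fun t => L (c i0 t)) (nhdsWithin 0 (Set.Ioi 0))
          (nhds 0) := by
        have := (hLc.tendsto 0).comp (hlim i0)
        simpa [Function.comp_def] using this
      -- choose s0 ∈ (0,1) with L (c i0 s0) < L (c i0 1)
      have hev : ∀ᶠ t in nhdsWithin 0 (Set.Ioi 0),
          L (c i0 t) < L (c i0 1) ∧ t ∈ Set.Ioo (0:ℝ) 1 := by
        have h1 : ∀ᶠ t in nhdsWithin 0 (Set.Ioi 0), L (c i0 t) < L (c i0 1) :=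
          htend (Iio_mem_nhds hg1)
        have h2 : ∀ᶠ t in nhdsWithin 0 (Set.Ioi 0), t ∈ Set.Ioo (0:ℝ) 1 := by
          filter_upwards [self_mem_nhdsWithin,
            eventually_nhdsWithin_of_eventually_nhds (eventually_lt_nhds (by norm_num : (0:ℝ) < 1))]
            with t h1 h2
          exact ⟨h1, h2⟩
        exact h1.and h2
      obtain ⟨s0, hs0lt, hs0⟩ := hev.exists
      -- mean value theorem
      obtain ⟨ξ, hξ, hξeq⟩ := exists_hasDerivAt_eq_slope (fun t => L (c i0 t))
        (fun t => L (deriv (c i0) t)) hs0.2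
        (hLc.comp_continuousOn ((hcont i0).mono (fun x hx =>
          ⟨le_of_lt (lt_of_lt_of_le hs0.1 hx.1), hx.2⟩)))
        (fun x hx => (L.toContinuousLinearMap.hasFDerivAt.comp_hasDerivAt x
          (hdiffAt i0 x ⟨lt_trans hs0.1 hx.1, hx.2⟩)))
      have hξ01 : ξ ∈ Set.Ioo (0:ℝ) 1 := ⟨lt_trans hs0.1 hξ.1, hξ.2⟩
      have hLξ : 0 < L (deriv (c i0) ξ) := by
        rw [hξeq]
        exact div_pos (by linarith) (by linarith [hs0.2])
      set r' := Function.update r i0 ξ with hr'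
      have hr'mem : ∀ i, r' i ∈ Set.Ioo (0:ℝ) 1 := by
        intro i
        rcases eq_or_ne i i0 with h | h
        · subst h; simpa [r'] using hξ01
        · simpa [r', Function.update_of_ne h] using hr i
      -- continuity step
      set F : (Fin k → ℝ) → ℝ := fun s => (Matrix.of fun (i j : Fin k) =>
        if (i:ℕ) < m + 1 then deriv (c i) (r' i) j else c i (s i) j).det with hF
      have hF1 : F (fun _ => 1) = L (deriv (c i0) ξ) := by
        rw [hLapp]
        show (Matrix.of fun (i j : Fin k) =>
          if (i:ℕ) < m + 1 then deriv (c i) (r' i) j else c i 1 j).det = _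
        congr 1
        funext i j
        rcases eq_or_ne i i0 with h | h
        · subst h
          simp [Matrix.of_apply, Function.update_self, r', i0]
        · have hne : (i:ℕ) ≠ m := fun hh => h (Fin.ext hh)
          simp only [Matrix.of_apply, Function.update_of_ne h, hv]
          rcases lt_or_ge (i:ℕ) m with h2 | h2
          · simp [h2, Nat.lt_succ_of_lt h2, r', Function.update_of_ne h]
          · have h3 : ¬ ((i:ℕ) < m) := not_lt.mpr h2
            have h4 : ¬ ((i:ℕ) < m + 1) := by omega
            simp [h3, h4]
      set T : Set (Fin k → ℝ) := Set.pi Set.univ (fun _ => Set.Icc (0:ℝ) 1) with hT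
      have hFc : ContinuousWithinAt F T (fun _ => 1) := by
        have hdetc : Continuous fun M : Matrix (Fin k) (Fin k) ℝ => M.det :=
          Continuous.matrix_det continuous_id
        apply hdetc.continuousAt.comp_continuousWithinAt
        apply continuousWithinAt_pi.2
        intro i
        apply continuousWithinAt_pi.2
        intro j
        simp only [Matrix.of_apply]
        rcases lt_or_ge (i:ℕ) (m+1) with h | h
        · simp only [h, if_pos]
          exact continuousWithinAt_const
        · have h' : ¬ ((i:ℕ) < m + 1) := not_lt.mpr h
          simp only [h', if_neg, not_false_iff]
          have : ContinuousWithinAt (fun s : Fin k → ℝ => c i (s i)) T (fun _ => 1) := by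
            apply ContinuousWithinAt.comp
              ((hcont i).continuousWithinAt (by constructor <;> norm_num))
              (continuous_apply i).continuousWithinAt
            intro s hs
            exact hs i (Set.mem_univ i)
          exact (continuous_apply j).continuousAt.comp_continuousWithinAt this
      have hmem : {s | 0 < F s} ∈ nhdsWithin (fun _ => (1:ℝ)) T := by
        apply hFc
        rw [hF1]
        exact Ioi_mem_nhds hLξ
      rw [Metric.mem_nhdsWithin_iff] at hmem
      obtain ⟨δ₂, hδ₂, hball⟩ := hmem
      refine ⟨r', hr'mem, min δ₂ 1, lt_min hδ₂ one_pos, fun s hs => ?_⟩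
      apply hball
      constructor
      · rw [Metric.mem_ball]
        haveI : Nonempty (Fin k) := ⟨⟨0, hk⟩⟩
        rw [dist_pi_lt_iff hδ₂]
        intro i
        rw [Real.dist_eq]
        have h1 := (hs i).1
        have h2 := (hs i).2
        have : min δ₂ 1 ≤ δ₂ := min_le_left _ _
        rw [abs_sub_lt_iff]
        constructor <;> linarith
      · intro i _
        have h1 := (hs i).1
        have h2 := (hs i).2
        have : min δ₂ 1 ≤ 1 := min_le_right _ _
        exact ⟨by linarith, h2⟩
  obtain ⟨r, hr, δ, hδ, hP⟩ := key k le_rfl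
  refine ⟨r, hr, ?_⟩
  have := hP (fun _ => 1)
    (fun i => show (1:ℝ) - δ < 1 ∧ (1:ℝ) ≤ 1 from ⟨by linarith, le_rfl⟩)
  convert this using 2
  funext i j
  simp [i.isLt]
end
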